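/- arXiv:2305.07274 — 2 statements merged into one kernel-verified Lean document; each statement's English description precedes it below -/
import Mathlib

section
/- For every positive integer n, the following identity of formal power series over ℤ holds: Σ_{T≥0} A(n,T) z^T = (z + z² + z³ + z⁴)^n · (1 − z)^{−1}, where (1 − z)^{−1} is the inverse of the power series 1 − z (which has constant term 1 and hence is a unit in ℤ⟦z⟧). -/
/-- A list of integers is quaternary if all entries lie in {1,2,3,4}. -/
def IsQ (x : List ℤ) : Prop := ∀ a ∈ x, 1 ≤ a ∧ a ≤ 4

/-- The alternating quaternary supersequence 1,2,3,4,1,2,3,4,... of length `T`. -/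
def altSeq (T : ℕ) : List ℤ := (List.range T).map (fun i => ((i % 4 : ℕ) : ℤ) + 1)

/-- The synthesis time of `x`: the least `T` such that `x` is a subsequence of `altSeq T`. -/
noncomputable def synTime (x : List ℤ) : ℕ := sInf {T : ℕ | x.Sublist (altSeq T)}

/-- The shifted modulo: the unique element of {1,2,3,4} congruent to `a` mod 4. -/
def mods4 (a : ℤ) : ℤ := (a - 1) % 4 + 1

/-- The differential word of `x`. -/
def diffWord (x : List ℤ) : List ℤ := List.zipWith (fun p c => mods4 (c - p)) (0 :: x) x

/-- The set of quaternary words of length `n` with synthesis time at most `T`. -/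
def W (n : ℕ) (T : ℤ) : Set (List ℤ) :=
  {x | x.length = n ∧ IsQ x ∧ (synTime x : ℤ) ≤ T}

/-- `A n T` is the number of quaternary words of length `n` with synthesis time at most `T`. -/
noncomputable def A (n : ℕ) (T : ℤ) : ℕ := (W n T).ncard

/-- The single-indel ball of `x`. -/
def ball (x : List ℤ) : Set (List ℤ) :=
  {y | y = x ∨ (y.length + 1 = x.length ∧ y.Sublist x) ∨
       (x.length + 1 = y.length ∧ IsQ y ∧ x.Sublist y)}

/-- The auxiliary binary sequence of `x` (as 0/1 naturals). -/
def auxSeq (x : List ℤ) : List ℕ :=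
  List.zipWith (fun a b => if a ≤ b then 1 else 0) x x.tail

/-- VT syndrome of a binary word: `∑ i·w_i` with positions starting from 1. -/
def vtSyn (w : List ℕ) : ℕ := ∑ i ∈ Finset.range w.length, (i + 1) * w.getD i 0

/-- The quaternary VT code. -/
def VTn (n : ℕ) (a : ZMod n) (b : ZMod 4) : Set (List ℤ) :=
  {x | x.length = n ∧ IsQ x ∧ ((vtSyn (auxSeq x) : ℕ) : ZMod n) = a ∧
       ((x.sum : ℤ) : ZMod 4) = b}

/-- The quaternary VT code with synthesis time constraint. -/
def VTnT (n : ℕ) (a : ZMod n) (b : ZMod 4) (T : ℤ) : Set (List ℤ) :=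
  {x ∈ VTn n a b | (synTime x : ℤ) ≤ T}

lemma mods4_pos (a : ℤ) : 1 ≤ mods4 a := by
  have := Int.emod_nonneg (a - 1) (by norm_num : (4:ℤ) ≠ 0); unfold mods4; omega

lemma mods4_le (a : ℤ) : mods4 a ≤ 4 := by
  have := Int.emod_lt_of_pos (a - 1) (by norm_num : (0:ℤ) < 4); unfold mods4; omega

lemma mods4_self {a : ℤ} (h1 : 1 ≤ a) (h4 : a ≤ 4) : mods4 a = a := by
  unfold mods4; rw [Int.emod_eq_of_lt (by omega) (by omega)]; ring

lemma dvd_sub_mods4 (a : ℤ) : (4:ℤ) ∣ a - mods4 a := by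
  refine ⟨(a-1)/4, ?_⟩
  have := Int.emod_def (a - 1) 4
  unfold mods4; omega

lemma mods4_congr {a b : ℤ} (h : (4:ℤ) ∣ a - b) : mods4 a = mods4 b := by
  unfold mods4; omega

lemma mods4_pred (b : ℤ) : mods4 b ≤ mods4 (b - 1) + 1 := by
  unfold mods4; omega

def altF (p : ℤ) (T : ℕ) : List ℤ := (List.range T).map (fun i : ℕ => mods4 (p + (i:ℤ) + 1))

lemma altSeq_eq (T : ℕ) : altSeq T = altF 0 T := by
  unfold altSeq altF
  apply List.map_congr_left
  intro i _
  have : ((i % 4 : ℕ) : ℤ) = (i : ℤ) % 4 := by push_cast; ring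
  unfold mods4; omega

lemma altF_succ (p : ℤ) (T : ℕ) : altF p (T+1) = mods4 (p+1) :: altF (p+1) T := by
  unfold altF
  rw [List.range_succ_eq_map]
  simp only [List.map_cons, List.map_map]
  norm_num
  intro i _
  congr 1
  ring

lemma altF_congr {p q : ℤ} (h : (4:ℤ) ∣ p - q) (T : ℕ) : altF p T = altF q T := by
  unfold altF
  apply List.map_congr_left
  intro i _
  exact mods4_congr (by obtain ⟨k, hk⟩ := h; exact ⟨k, by linarith⟩)

lemma altF_append (p : ℤ) (a b : ℕ) : altF p (a + b) = altF p a ++ altF (p + a) b := by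
  unfold altF
  rw [List.range_add, List.map_append, List.map_map]
  congr 1
  apply List.map_congr_left
  intro i _
  simp only [Function.comp]
  congr 1
  push_cast
  ring

def dlist (p : ℤ) : List ℤ → List ℤ
  | [] => []
  | c :: x => mods4 (c - p) :: dlist c x

def dsumN (p : ℤ) (x : List ℤ) : ℕ := ((dlist p x).map Int.toNat).sum

def toWord (p : ℤ) : List ℤ → List ℤ
  | [] => []
  | d :: ds => mods4 (p + d) :: toWord (mods4 (p + d)) ds

lemma dsumN_cons (p c : ℤ) (x : List ℤ) :
    dsumN p (c :: x) = (mods4 (c - p)).toNat + dsumN c x := rfl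

/-- lower bound -/
lemma dsumN_le_of_sublist (x : List ℤ) :
    ∀ p : ℤ, ∀ T : ℕ, x.Sublist (altF p T) → dsumN p x ≤ T := by
  induction x with
  | nil => intro p T _; simp [dsumN, dlist]
  | cons c x ih =>
    intro p T
    induction T generalizing p with
    | zero => intro h; simp [altF] at h
    | succ T ihT =>
      intro h
      rw [altF_succ] at h
      by_cases hc : c = mods4 (p+1)
      · have hx : x.Sublist (altF (p+1) T) := by
          cases h with
          | cons _ h2 => exact (List.sublist_cons_self c x).trans h2
          | cons_cons _ h2 => exact h2
        have heq : altF (p+1) T = altF c T := altF_congr (by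
          have := dvd_sub_mods4 (p+1); rw [← hc] at this; exact this) T
        rw [heq] at hx
        have h1 : mods4 (c - p) = 1 := by
          have hd : (4:ℤ) ∣ (c - p) - 1 := by
            have := dvd_sub_mods4 (p+1); rw [← hc] at this
            obtain ⟨k, hk⟩ := this; exact ⟨-k, by linarith⟩
          rw [mods4_congr hd]; unfold mods4; norm_num
        rw [dsumN_cons, h1]
        have := ih c T hx
        omega
      · have hx : (c :: x).Sublist (altF (p+1) T) := by
          cases h with
          | cons _ h2 => exact h2
          | cons_cons _ h2 => exact absurd rfl hc
        have := ihT (p+1) hx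
        rw [dsumN_cons] at this ⊢
        have hm : mods4 (c - p) ≤ mods4 (c - (p+1)) + 1 := by
          have h := mods4_pred (c - p)
          have e : c - p - 1 = c - (p+1) := by ring
          rwa [e] at h
        have h1 := mods4_pos (c - (p+1))
        have h2 := mods4_pos (c - p)
        omega

/-- upper bound -/
lemma sublist_altF (x : List ℤ) (hx : IsQ x) :
    ∀ p : ℤ, x.Sublist (altF p (dsumN p x)) := by
  induction x with
  | nil => intro p; simp [dsumN, dlist]
  | cons c x ih =>
    intro p
    have hc : 1 ≤ c ∧ c ≤ 4 := hx c List.mem_cons_self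
    have hxq : IsQ x := fun a ha => hx a (List.mem_cons_of_mem c ha)
    set m := (mods4 (c - p)).toNat with hm
    have hm1 : 1 ≤ m := by have := mods4_pos (c - p); omega
    have hmz : (m : ℤ) = mods4 (c - p) := by have := mods4_pos (c - p); omega
    rw [dsumN_cons, ← hm, altF_append]
    have hcongr : altF (p + m) (dsumN c x) = altF c (dsumN c x) := by
      apply altF_congr
      have := dvd_sub_mods4 (c - p)
      obtain ⟨k, hk⟩ := this
      exact ⟨-k, by rw [hmz]; linarith⟩
    rw [hcongr]
    have hlast : altF p m = altF p (m - 1) ++ [c] := by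
      have : m = (m - 1) + 1 := by omega
      rw [this, altF_append]
      congr 1
      have hone : ∀ q : ℤ, altF q 1 = [mods4 (q + 1)] := by
        intro q
        show List.map (fun i : ℕ => mods4 (q + (i:ℤ) + 1)) [0] = [mods4 (q + 1)]
        simp
      rw [hone]
      congr 1
      have hc1 : ((m-1:ℕ):ℤ) = (m:ℤ)-1 := by omega
      have h4 : (4:ℤ) ∣ (p + ((m-1:ℕ):ℤ) + 1) - c := by
        have := dvd_sub_mods4 (c - p)
        obtain ⟨k, hk⟩ := this
        refine ⟨-k, ?_⟩
        rw [hc1]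
        have hq : ((m:ℤ) - 1) = mods4 (c - p) - 1 := by omega
        rw [hq]; linarith
      rw [mods4_congr h4, mods4_self hc.1 hc.2]
    rw [hlast]
    have h1 : [c].Sublist (altF p (m-1) ++ [c]) := List.sublist_append_right _ _
    have h2 := ih hxq c
    have : c :: x = [c] ++ x := rfl
    rw [this]
    exact List.Sublist.append h1 h2

lemma synTime_eq (x : List ℤ) (hx : IsQ x) : synTime x = dsumN 0 x := by
  have hmem : dsumN 0 x ∈ {T : ℕ | x.Sublist (altSeq T)} := by
    rw [Set.mem_setOf_eq, altSeq_eq]; exact sublist_altF x hx 0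
  apply le_antisymm
  · exact Nat.sInf_le hmem
  · have hne : {T : ℕ | x.Sublist (altSeq T)}.Nonempty := ⟨_, hmem⟩
    have := Nat.sInf_mem hne
    rw [Set.mem_setOf_eq, altSeq_eq] at this
    exact dsumN_le_of_sublist x 0 _ this

lemma toWord_length (ds : List ℤ) : ∀ p, (toWord p ds).length = ds.length := by
  induction ds with
  | nil => intro p; rfl
  | cons d ds ih => intro p; simp [toWord, ih]

lemma toWord_isQ (ds : List ℤ) : ∀ p, IsQ (toWord p ds) := by
  induction ds with
  | nil => intro p a ha; simp [toWord] at ha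
  | cons d ds ih =>
    intro p a ha
    rw [toWord] at ha
    rcases List.mem_cons.mp ha with h | h
    · subst h; exact ⟨mods4_pos _, mods4_le _⟩
    · exact ih _ a h

lemma dlist_toWord (ds : List ℤ) (hds : IsQ ds) : ∀ p, dlist p (toWord p ds) = ds := by
  induction ds with
  | nil => intro p; rfl
  | cons d ds ih =>
    intro p
    have hd := hds d List.mem_cons_self
    have hq : IsQ ds := fun a ha => hds a (List.mem_cons_of_mem d ha)
    rw [toWord, dlist]
    congr 1
    · have h4 : (4:ℤ) ∣ (mods4 (p + d) - p) - d := by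
        obtain ⟨k, hk⟩ := dvd_sub_mods4 (p + d)
        exact ⟨-k, by linarith⟩
      rw [mods4_congr h4, mods4_self hd.1 hd.2]
    · exact ih hq _

lemma toWord_dlist (x : List ℤ) (hx : IsQ x) : ∀ p, toWord p (dlist p x) = x := by
  induction x with
  | nil => intro p; rfl
  | cons c x ih =>
    intro p
    have hc := hx c List.mem_cons_self
    have hq : IsQ x := fun a ha => hx a (List.mem_cons_of_mem c ha)
    rw [dlist, toWord]
    have key : mods4 (p + mods4 (c - p)) = c := by
      have h4 : (4:ℤ) ∣ (p + mods4 (c - p)) - c := by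
        obtain ⟨k, hk⟩ := dvd_sub_mods4 (c - p)
        exact ⟨-k, by linarith⟩
      rw [mods4_congr h4, mods4_self hc.1 hc.2]
    rw [key]
    congr 1
    exact ih hq c

lemma dlist_length (x : List ℤ) : ∀ p, (dlist p x).length = x.length := by
  induction x with
  | nil => intro p; rfl
  | cons c x ih => intro p; simp [dlist, ih]

lemma dlist_isQ (x : List ℤ) : ∀ p, IsQ (dlist p x) := by
  induction x with
  | nil => intro p a ha; simp [dlist] at ha
  | cons c x ih =>
    intro p a ha
    rw [dlist] at ha
    rcases List.mem_cons.mp ha with h | h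
    · subst h; exact ⟨mods4_pos _, mods4_le _⟩
    · exact ih c a h

def fw (n : ℕ) (d : Fin n → Fin 4) : List ℤ := toWord 0 (List.ofFn fun i => ((d i : ℕ) : ℤ) + 1)

def ew (n : ℕ) (d : Fin n → Fin 4) : ℕ := ∑ i, ((d i : ℕ) + 1)

lemma ofFn_isQ (n : ℕ) (d : Fin n → Fin 4) : IsQ (List.ofFn fun i => ((d i : ℕ) : ℤ) + 1) := by
  intro a ha
  rw [List.mem_ofFn] at ha
  obtain ⟨i, hi⟩ := ha
  have := (d i).isLt
  omega

lemma fw_isQ (n : ℕ) (d : Fin n → Fin 4) : IsQ (fw n d) := toWord_isQ _ 0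

lemma fw_length (n : ℕ) (d : Fin n → Fin 4) : (fw n d).length = n := by
  rw [fw, toWord_length, List.length_ofFn]

lemma dlist_fw (n : ℕ) (d : Fin n → Fin 4) :
    dlist 0 (fw n d) = List.ofFn fun i => ((d i : ℕ) : ℤ) + 1 :=
  dlist_toWord _ (ofFn_isQ n d) 0

lemma dsumN_fw (n : ℕ) (d : Fin n → Fin 4) : dsumN 0 (fw n d) = ew n d := by
  rw [dsumN, dlist_fw, List.map_ofFn, List.sum_ofFn]
  unfold ew
  refine Finset.sum_congr rfl (fun i _ => ?_)
  simp only [Function.comp]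
  omega

lemma fw_injective (n : ℕ) : Function.Injective (fw n) := by
  intro d d' h
  have h2 : dlist 0 (fw n d) = dlist 0 (fw n d') := by rw [h]
  rw [dlist_fw, dlist_fw] at h2
  have h3 := List.ofFn_injective h2
  funext i
  have h4 := congrFun h3 i
  have : ((d i : ℕ) : ℤ) = ((d' i : ℕ) : ℤ) := by omega
  exact Fin.ext (by exact_mod_cast this)

lemma isQ_getElem {l : List ℤ} (h : IsQ l) (j : ℕ) (hj : j < l.length) :
    1 ≤ l[j] ∧ l[j] ≤ 4 :=
  h _ (List.getElem_mem hj)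

lemma W_eq (n T : ℕ) :
    W n (T:ℤ) = ↑((Finset.univ.filter (fun d : Fin n → Fin 4 => ew n d ≤ T)).image (fw n)) := by
  ext x
  simp only [Finset.coe_image, Finset.coe_filter, Set.mem_image, Set.mem_setOf_eq,
    Finset.mem_univ, true_and]
  constructor
  · rintro ⟨hlen, hq, hsyn⟩
    have hdl : (dlist 0 x).length = n := by rw [dlist_length]; exact hlen
    have hdsq : IsQ (dlist 0 x) := dlist_isQ x 0
    have hbound : ∀ i : Fin n, ((dlist 0 x)[(i:ℕ)]'(by omega)).toNat - 1 < 4 := fun i => by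
      have hm := isQ_getElem hdsq (i:ℕ) (by omega); omega
    set d : Fin n → Fin 4 :=
      fun i => ⟨((dlist 0 x)[(i:ℕ)]'(by omega)).toNat - 1, hbound i⟩ with hd
    have hofn : (List.ofFn fun i : Fin n => ((d i : ℕ) : ℤ) + 1) = dlist 0 x := by
      apply List.ext_getElem
      · rw [List.length_ofFn]; exact hdl.symm
      · intro j h1 h2
        rw [List.getElem_ofFn]
        have hm := isQ_getElem hdsq j h2
        simp only [hd]
        omega
    have hfw : fw n d = x := by
      rw [fw, hofn]; exact toWord_dlist x hq 0
    refine ⟨d, ?_, hfw⟩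
    have he : ew n d = synTime x := by
      rw [← dsumN_fw n d, hfw, synTime_eq x hq]
    omega
  · rintro ⟨d, hd, rfl⟩
    refine ⟨fw_length n d, fw_isQ n d, ?_⟩
    rw [synTime_eq _ (fw_isQ n d), dsumN_fw]
    exact_mod_cast hd

lemma A_eq_card (n T : ℕ) :
    A n (T:ℤ) = ((Finset.univ.filter (fun d : Fin n → Fin 4 => ew n d ≤ T))).card := by
  rw [A, W_eq, Set.ncard_coe_finset,
    Finset.card_image_of_injective _ (fw_injective n)]

open PowerSeries in
lemma inv_one_sub_X : PowerSeries.invOfUnit (1 - X : PowerSeries ℤ) 1 =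
    PowerSeries.mk (fun _ => (1:ℤ)) := by
  have h0 : PowerSeries.constantCoeff (R := ℤ) (1 - X) = ((1 : ℤˣ) : ℤ) := by simp
  have hmul : (1 - X : PowerSeries ℤ) * PowerSeries.mk (fun _ => (1:ℤ)) = 1 := by
    ext T
    rw [sub_mul, one_mul]
    cases T with
    | zero => simp
    | succ T => simp [PowerSeries.coeff_succ_X_mul]
  have h1 : (1 - X : PowerSeries ℤ) * PowerSeries.invOfUnit (1 - X) 1 = 1 :=
    PowerSeries.mul_invOfUnit _ _ h0
  calc PowerSeries.invOfUnit (1 - X : PowerSeries ℤ) 1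
      = (1 - X) * PowerSeries.mk (fun _ => (1:ℤ)) * PowerSeries.invOfUnit (1 - X) 1 := by
        rw [hmul, one_mul]
    _ = PowerSeries.mk (fun _ => (1:ℤ)) * ((1 - X) * PowerSeries.invOfUnit (1 - X) 1) := by
        ring
    _ = PowerSeries.mk (fun _ => (1:ℤ)) := by rw [h1, mul_one]

open PowerSeries in
lemma pow_expand (n : ℕ) :
    ((X + X ^ 2 + X ^ 3 + X ^ 4 : PowerSeries ℤ)) ^ n =
      ∑ d ∈ Fintype.piFinset (fun _ : Fin n => (Finset.univ : Finset (Fin 4))),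
        (X : PowerSeries ℤ) ^ (ew n d) := by
  have hbase : (X + X ^ 2 + X ^ 3 + X ^ 4 : PowerSeries ℤ) =
      ∑ k : Fin 4, (X : PowerSeries ℤ) ^ ((k : ℕ) + 1) := by
    rw [Fin.sum_univ_four]
    norm_num [show ((0:Fin 4):ℕ) = 0 from rfl, show ((1:Fin 4):ℕ) = 1 from rfl,
      show ((2:Fin 4):ℕ) = 2 from rfl, show ((3:Fin 4):ℕ) = 3 from rfl]
  rw [hbase]
  have hprod : (∑ k : Fin 4, (X : PowerSeries ℤ) ^ ((k : ℕ) + 1)) ^ n =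
      ∏ _i : Fin n, (∑ k : Fin 4, (X : PowerSeries ℤ) ^ ((k : ℕ) + 1)) := by
    rw [Finset.prod_const, Finset.card_univ, Fintype.card_fin]
  rw [hprod, Finset.prod_univ_sum]
  refine Finset.sum_congr rfl (fun d _ => ?_)
  rw [ew, ← Finset.prod_pow_eq_pow_sum]

open PowerSeries in
lemma coeff_Xpow_mul_one (e T : ℕ) :
    (PowerSeries.coeff (R := ℤ) T) ((X : PowerSeries ℤ) ^ e * PowerSeries.mk (fun _ => (1:ℤ))) =
      if e ≤ T then 1 else 0 := by
  by_cases h : e ≤ T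
  · rw [if_pos h]
    have : T = (T - e) + e := by omega
    rw [this, PowerSeries.coeff_X_pow_mul, PowerSeries.coeff_mk]
  · rw [if_neg h, PowerSeries.coeff_mul]
    apply Finset.sum_eq_zero
    intro p hp
    rw [Finset.HasAntidiagonal.mem_antidiagonal] at hp
    rw [PowerSeries.coeff_X_pow, if_neg (by omega)]
    ring

open PowerSeries in
/-- the generating function identity
`∑_{T ≥ 0} A(n,T) z^T = (z + z² + z³ + z⁴)^n · (1 - z)⁻¹` in `ℤ⟦z⟧`,
where the inverse of `1 - z` is taken via its unit constant term `1`. -/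
theorem A_generating_function (n : ℕ) (hn : 0 < n) :
    PowerSeries.mk (fun T : ℕ => (A n (T : ℤ) : ℤ)) =
      (X + X ^ 2 + X ^ 3 + X ^ 4) ^ n *
        PowerSeries.invOfUnit (1 - X : PowerSeries ℤ) 1 := by
  rw [inv_one_sub_X, pow_expand, Finset.sum_mul]
  ext T
  rw [PowerSeries.coeff_mk, map_sum]
  have : ∀ d ∈ Fintype.piFinset (fun _ : Fin n => (Finset.univ : Finset (Fin 4))),
      (PowerSeries.coeff (R := ℤ) T) ((X : PowerSeries ℤ) ^ (ew n d) * PowerSeries.mk (fun _ => (1:ℤ)))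
        = if ew n d ≤ T then 1 else 0 := fun d _ => coeff_Xpow_mul_one _ _
  rw [Finset.sum_congr rfl this, Fintype.piFinset_univ, Finset.sum_boole, A_eq_card]
end

section
/- For every positive integer n, integer T with n < T ≤ 4n, and every a ∈ ℤ_n, b ∈ ℤ_4, the set VT_n(a,b,T) is an (n,T,B)-synthesis code: every x ∈ VT_n(a,b,T) satisfies S(x) ≤ T, and for all distinct x, y ∈ VT_n(a,b,T) we have B(x) ∩ B(y) = ∅. -/
/- ## auxiliary lemmas -/

lemma sumIdx (l : List ℕ) : ∑ i ∈ Finset.range l.length, l.getD i 0 = l.sum := by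
  induction l with
  | nil => simp
  | cons a l ih =>
    rw [List.length_cons, Finset.sum_range_succ']
    simp only [List.getD_cons_succ, List.getD_cons_zero, List.sum_cons, ih]
    omega

lemma vtSyn_nil : vtSyn [] = 0 := by simp [vtSyn]

lemma vtSyn_cons (a : ℕ) (l : List ℕ) : vtSyn (a :: l) = a + vtSyn l + l.sum := by
  rw [vtSyn, List.length_cons, Finset.sum_range_succ']
  simp only [List.getD_cons_succ, List.getD_cons_zero]
  rw [vtSyn, ← sumIdx l]
  have : ∀ i ∈ Finset.range l.length, (i + 1 + 1) * l.getD i 0 = (i + 1) * l.getD i 0 + l.getD i 0 := by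
    intro i _; ring
  rw [Finset.sum_congr rfl this, Finset.sum_add_distrib]
  ring

lemma vtSyn_append (l1 l2 : List ℕ) :
    vtSyn (l1 ++ l2) = vtSyn l1 + vtSyn l2 + l1.length * l2.sum := by
  induction l1 with
  | nil => simp [vtSyn_nil]
  | cons a l ih =>
    rw [List.cons_append, vtSyn_cons, ih, vtSyn_cons, List.sum_append, List.length_cons]
    ring

lemma auxSeq_nil : auxSeq [] = [] := rfl
lemma auxSeq_single (a : ℤ) : auxSeq [a] = [] := rfl
lemma auxSeq_cons₂ (a b : ℤ) (l : List ℤ) :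
    auxSeq (a :: b :: l) = (if a ≤ b then 1 else 0) :: auxSeq (b :: l) := rfl

lemma auxSeq_length (l : List ℤ) : (auxSeq l).length = l.length - 1 := by
  simp [auxSeq]

lemma auxSeq_append (l1 : List ℤ) (a : ℤ) (l2 : List ℤ) :
    auxSeq (l1 ++ a :: l2) = auxSeq (l1 ++ [a]) ++ auxSeq (a :: l2) := by
  induction l1 with
  | nil => simp [auxSeq_single]
  | cons x l ih =>
    cases l with
    | nil => simp [auxSeq_cons₂, auxSeq_single]
    | cons y r =>
      simp only [List.cons_append, auxSeq_cons₂] at *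
      rw [ih]

lemma auxSeq_snoc_append (l1 : List ℤ) (a : ℤ) (l2 : List ℤ) :
    auxSeq ((l1 ++ [a]) ++ l2) = auxSeq (l1 ++ [a]) ++ auxSeq (a :: l2) := by
  cases l2 with
  | nil => simp [auxSeq_single]
  | cons b r =>
    have : (l1 ++ [a]) ++ b :: r = l1 ++ a :: (b :: r) := by simp
    rw [this, auxSeq_append]

lemma auxSeq_sum_le (l : List ℤ) : (auxSeq l).sum ≤ (auxSeq l).length := by
  induction l with
  | nil => simp [auxSeq_nil]
  | cons a l ih =>
    cases l with
    | nil => simp [auxSeq_single]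
    | cons b r =>
      rw [auxSeq_cons₂, List.sum_cons, List.length_cons]
      have : (if a ≤ b then 1 else 0) ≤ 1 := by split <;> omega
      omega

lemma chain_le_of_sum_eq (l : List ℤ) (h : (auxSeq l).sum = (auxSeq l).length) :
    l.Chain' (· ≤ ·) := by
  induction l with
  | nil => exact List.isChain_nil
  | cons a l ih =>
    cases l with
    | nil => exact List.isChain_singleton _
    | cons b r =>
      rw [auxSeq_cons₂, List.sum_cons, List.length_cons] at h
      have h1 : (if a ≤ b then 1 else 0) ≤ 1 := by split <;> omega
      have h2 := auxSeq_sum_le (b :: r)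
      have hab : a ≤ b := by
        by_contra hc
        rw [if_neg hc] at h; omega
      exact List.IsChain.cons_cons hab (ih (by rw [if_pos hab] at h; omega))

lemma chain_gt_of_sum_eq_zero (l : List ℤ) (h : (auxSeq l).sum = 0) :
    l.Chain' (fun a b => b < a) := by
  induction l with
  | nil => exact List.isChain_nil
  | cons a l ih =>
    cases l with
    | nil => exact List.isChain_singleton _
    | cons b r =>
      rw [auxSeq_cons₂, List.sum_cons] at h
      have hab : ¬ a ≤ b := by
        by_contra hc
        rw [if_pos hc] at h; omega
      have h0 : (if a ≤ b then 1 else 0) = 0 := by rw [if_neg hab]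
      exact List.IsChain.cons_cons (by omega) (ih (by omega))

lemma exists_insert_of_sublist {z x : List ℤ} (h : z.Sublist x) (hl : z.length + 1 = x.length) :
    ∃ u c t, x = u ++ c :: t ∧ z = u ++ t := by
  induction x generalizing z with
  | nil => simp at hl
  | cons a x ih =>
    cases h with
    | cons _ h' =>
      have hz : z = x := h'.eq_of_length (by simpa using hl)
      exact ⟨[], a, x, by simp, by simp [hz]⟩
    | cons_cons _ h' =>
      rename_i z'
      obtain ⟨u, d, t, h1, h2⟩ := ih h' (by simpa using hl)
      exact ⟨a :: u, d, t, by simp [h1], by simp [h2]⟩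

set_option maxHeartbeats 2000000 in
lemma keyArith (n m k SW E1 E2 F1 F2 G1 G2 : ℕ) (D : ℤ)
    (hD : D = (m:ℤ) * ((E1:ℤ) - E2) + (m+1) * F1 - (m+k) * F2 + SW + (m+k+1) * ((G1:ℤ) - G2))
    (hE1 : E1 ≤ 1) (hE2 : E2 ≤ 1) (hF1 : F1 ≤ 1) (hF2 : F2 ≤ 1) (hG1 : G1 ≤ 1) (hG2 : G2 ≤ 1)
    (hk : 1 ≤ k) (hSW : SW ≤ k - 1)
    (hm : m = 0 → E1 = 0 ∧ E2 = 0)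
    (hG : (G1 = 0 ∧ G2 = 0) ∨ m + k + 2 ≤ n)
    (hn : m + k + 1 ≤ n)
    (hi1 : F1 = 1 → E1 = 1 → E2 = 1) (hi2 : F1 = 0 → E2 = 1 → E1 = 1)
    (hi3 : F2 = 1 → G2 = 1 → G1 = 1) (hi4 : F2 = 0 → G1 = 1 → G2 = 1)
    (hdvd : (n:ℤ) ∣ D) :
    (F1 = 1 ∧ F2 = 1 ∧ SW = k - 1) ∨ (F1 = 0 ∧ F2 = 0 ∧ SW = 0) := by
  rcases Nat.le_one_iff_eq_zero_or_eq_one.mp hE1 with rfl | rfl <;>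
  rcases Nat.le_one_iff_eq_zero_or_eq_one.mp hE2 with rfl | rfl <;>
  rcases Nat.le_one_iff_eq_zero_or_eq_one.mp hF1 with rfl | rfl <;>
  rcases Nat.le_one_iff_eq_zero_or_eq_one.mp hF2 with rfl | rfl <;>
  rcases Nat.le_one_iff_eq_zero_or_eq_one.mp hG1 with rfl | rfl <;>
  rcases Nat.le_one_iff_eq_zero_or_eq_one.mp hG2 with rfl | rfl <;>
  · have hD0 : D = 0 := by
      refine Int.eq_zero_of_abs_lt_dvd hdvd ?_
      rw [abs_lt]
      push_cast at hD
      omega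
    push_cast at hD
    omega

lemma cons_repl (c : ℤ) (L : ℕ) (t : List ℤ) :
    c :: (List.replicate L c ++ t) = List.replicate L c ++ (c :: t) := by
  induction L with
  | zero => simp
  | succ L ih => simp only [List.replicate_succ, List.cons_append, ih]

lemma finishA (u w t : List ℤ) (c : ℤ) (hall : ∀ b ∈ w, b = c) :
    u ++ c :: (w ++ t) = (u ++ w) ++ c :: t := by
  have hr := List.eq_replicate_of_mem hall
  rw [hr, List.append_assoc, cons_repl]

lemma allEq (c w1 wk : ℤ) (w'' w' : List ℤ) (hconc : w1 :: w'' = w' ++ [wk])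
    (h1 : c ≤ w1) (h2 : wk ≤ c)
    (hsum : (auxSeq (w1 :: w'')).sum = (auxSeq (w1 :: w'')).length) :
    ∀ b ∈ w1 :: w'', b = c := by
  have hch := chain_le_of_sum_eq _ hsum
  have hpw := List.isChain_iff_pairwise.mp hch
  intro b hb
  refine le_antisymm ?_ ?_
  · have hpw2 := hpw
    have hb2 := hb
    rw [hconc] at hpw2 hb2
    rw [List.pairwise_append] at hpw2
    rcases List.mem_append.mp hb2 with h | h
    · exact le_trans (hpw2.2.2 b h wk (by simp)) h2
    · rw [List.mem_singleton.mp h]; exact h2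
  · rcases List.mem_cons.mp hb with rfl | h
    · exact h1
    · exact le_trans h1 ((List.pairwise_cons.mp hpw).1 b h)

lemma noDesc (c w1 wk : ℤ) (w'' w' : List ℤ) (hconc : w1 :: w'' = w' ++ [wk])
    (h1 : w1 < c) (h2 : c < wk) (hsum : (auxSeq (w1 :: w'')).sum = 0) : False := by
  haveI : IsTrans ℤ (fun a b => b < a) := ⟨fun _ _ _ ha hb => lt_trans hb ha⟩
  have hch := chain_gt_of_sum_eq_zero _ hsum
  have hpw := List.isChain_iff_pairwise.mp hch
  have hwk : wk ∈ w1 :: w'' := by rw [hconc]; simp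
  rcases List.mem_cons.mp hwk with h | h
  · omega
  · have := (List.pairwise_cons.mp hpw).1 wk h
    omega

lemma core (n : ℕ) (u w t : List ℤ) (c d : ℤ)
    (hc1 : 1 ≤ c) (hc4 : c ≤ 4) (hd1 : 1 ≤ d) (hd4 : d ≤ 4)
    (hn : n = u.length + w.length + 1 + t.length)
    (hsum : (((u ++ c :: (w ++ t)).sum : ℤ) : ZMod 4) = ((((u ++ w) ++ d :: t).sum : ℤ) : ZMod 4))
    (hsyn : ((vtSyn (auxSeq (u ++ c :: (w ++ t))) : ℕ) : ZMod n)
           = ((vtSyn (auxSeq ((u ++ w) ++ d :: t)) : ℕ) : ZMod n)) :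
    u ++ c :: (w ++ t) = (u ++ w) ++ d :: t := by
  -- step 1 : c = d
  have hmod := (ZMod.intCast_eq_intCast_iff _ _ _).mp hsum
  have h4 := hmod.dvd
  have hdc : ((((u ++ w) ++ d :: t).sum : ℤ)) - (((u ++ c :: (w ++ t)).sum : ℤ)) = d - c := by
    simp only [List.sum_append, List.sum_cons]; ring
  rw [hdc] at h4
  obtain rfl : c = d := by omega
  clear hsum hmod h4 hdc hd1 hd4 hc1 hc4
  -- step 2 : trivial case w = []
  rcases w with _ | ⟨w1, w''⟩
  · simp
  -- step 3 : main case
  rcases List.eq_nil_or_concat' (w1 :: w'') with hbad | ⟨w', wk, hconc⟩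
  · simp at hbad
  have hdvd := ((ZMod.natCast_eq_natCast_iff _ _ _).mp hsyn).symm.dvd
  have hSWle : (auxSeq (w1 :: w'')).sum ≤ w''.length := by
    have h := auxSeq_sum_le (w1 :: w'')
    rw [auxSeq_length] at h
    simpa using h
  have hWc : auxSeq ((w1 :: w'') ++ [c]) = auxSeq (w1 :: w'') ++ [if wk ≤ c then 1 else 0] := by
    rw [hconc, auxSeq_snoc_append, auxSeq_cons₂, auxSeq_single]
  rcases List.eq_nil_or_concat' u with rfl | ⟨u', um, rfl⟩
  · -- u = []
    rcases t with _ | ⟨t1, t'⟩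
    · -- u = [], t = []
      have hax : auxSeq (([] : List ℤ) ++ c :: ((w1 :: w'') ++ ([] : List ℤ)))
          = (if c ≤ w1 then 1 else 0) :: auxSeq (w1 :: w'') := by
        simp only [List.nil_append, List.append_nil, auxSeq_cons₂]
      have hay : auxSeq ((([] : List ℤ) ++ (w1 :: w'')) ++ c :: ([] : List ℤ))
          = auxSeq (w1 :: w'') ++ [if wk ≤ c then 1 else 0] := by
        rw [List.nil_append]
        exact hWc
      have key := keyArith n 0 (w''.length + 1) ((auxSeq (w1 :: w'')).sum)
        0 0 (if c ≤ w1 then 1 else 0) (if wk ≤ c then 1 else 0) 0 0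
        ((vtSyn (auxSeq (([] : List ℤ) ++ c :: ((w1 :: w'') ++ ([] : List ℤ)))) : ℤ) -
          (vtSyn (auxSeq ((([] : List ℤ) ++ (w1 :: w'')) ++ c :: ([] : List ℤ))) : ℤ))
        (by rw [hax, hay]
            simp only [vtSyn_append, vtSyn_cons, vtSyn_nil, List.sum_append, List.sum_cons,
              List.sum_nil, List.length_append, List.length_cons, List.length_nil,
              auxSeq_length, Nat.add_sub_cancel]
            push_cast
            ring)
        (by omega) (by omega) (by split <;> omega) (by split <;> omega) (by omega) (by omega)
        (by omega) (by omega) (by omega) (Or.inl ⟨rfl, rfl⟩) (by simp at hn; omega)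
        (by omega) (by omega) (by omega) (by omega)
        hdvd
      rcases key with ⟨hf1, hf2, hsw⟩ | ⟨hf1, hf2, hsw⟩
      · have hcw1 : c ≤ w1 := by by_contra hcon; simp [hcon] at hf1
        have hwkc : wk ≤ c := by by_contra hcon; simp [hcon] at hf2
        have hsum' : (auxSeq (w1 :: w'')).sum = (auxSeq (w1 :: w'')).length := by
          rw [auxSeq_length]; simpa using hsw
        exact finishA _ _ _ _ (allEq c w1 wk w'' w' hconc hcw1 hwkc hsum')
      · exfalso
        have hcw1 : ¬ c ≤ w1 := by by_contra hcon; simp [hcon] at hf1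
        have hwkc : ¬ wk ≤ c := by by_contra hcon; simp [hcon] at hf2
        exact noDesc c w1 wk w'' w' hconc (by omega) (by omega) hsw
    · have hWsplit : auxSeq ((w1 :: w'') ++ t1 :: t')
          = auxSeq (w1 :: w'') ++ (if wk ≤ t1 then 1 else 0) :: auxSeq (t1 :: t') := by
        rw [hconc, auxSeq_snoc_append, auxSeq_cons₂]
      have hax : auxSeq (([] : List ℤ) ++ c :: ((w1 :: w'') ++ t1 :: t'))
          = (if c ≤ w1 then 1 else 0) ::
            (auxSeq (w1 :: w'') ++ (if wk ≤ t1 then 1 else 0) :: auxSeq (t1 :: t')) := by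
        rw [List.nil_append, List.cons_append, auxSeq_cons₂, ← List.cons_append, hWsplit]
      have hay : auxSeq ((([] : List ℤ) ++ (w1 :: w'')) ++ c :: (t1 :: t'))
          = (auxSeq (w1 :: w'') ++ [if wk ≤ c then 1 else 0]) ++
            ((if c ≤ t1 then 1 else 0) :: auxSeq (t1 :: t')) := by
        rw [List.nil_append, auxSeq_append (w1 :: w'') c (t1 :: t'), hWc, auxSeq_cons₂]
      have key := keyArith n 0 (w''.length + 1) ((auxSeq (w1 :: w'')).sum)
        0 0 (if c ≤ w1 then 1 else 0) (if wk ≤ c then 1 else 0)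
        (if wk ≤ t1 then 1 else 0) (if c ≤ t1 then 1 else 0)
        ((vtSyn (auxSeq (([] : List ℤ) ++ c :: ((w1 :: w'') ++ t1 :: t'))) : ℤ) -
          (vtSyn (auxSeq ((([] : List ℤ) ++ (w1 :: w'')) ++ c :: (t1 :: t'))) : ℤ))
        (by rw [hax, hay]
            simp only [vtSyn_append, vtSyn_cons, vtSyn_nil, List.sum_append, List.sum_cons,
              List.sum_nil, List.length_append, List.length_cons, List.length_nil,
              auxSeq_length, Nat.add_sub_cancel]
            push_cast
            ring)
        (by omega) (by omega) (by split <;> omega) (by split <;> omega)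
        (by split <;> omega) (by split <;> omega)
        (by omega) (by omega) (by omega) (Or.inr (by simp at hn; omega)) (by simp at hn; omega)
        (by omega) (by omega) (by split_ifs <;> intro h1 h2 <;> first | exact h1.elim | exact h2.elim | omega) (by split_ifs <;> intro h1 h2 <;> first | exact h1.elim | exact h2.elim | omega)
        hdvd
      rcases key with ⟨hf1, hf2, hsw⟩ | ⟨hf1, hf2, hsw⟩
      · have hcw1 : c ≤ w1 := by by_contra hcon; simp [hcon] at hf1
        have hwkc : wk ≤ c := by by_contra hcon; simp [hcon] at hf2
        have hsum' : (auxSeq (w1 :: w'')).sum = (auxSeq (w1 :: w'')).length := by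
          rw [auxSeq_length]; simpa using hsw
        exact finishA _ _ _ _ (allEq c w1 wk w'' w' hconc hcw1 hwkc hsum')
      · exfalso
        have hcw1 : ¬ c ≤ w1 := by by_contra hcon; simp [hcon] at hf1
        have hwkc : ¬ wk ≤ c := by by_contra hcon; simp [hcon] at hf2
        exact noDesc c w1 wk w'' w' hconc (by omega) (by omega) hsw
  · -- u = u' ++ [um]
    have hUc : auxSeq ((u' ++ [um]) ++ [c]) = auxSeq (u' ++ [um]) ++ [if um ≤ c then 1 else 0] := by
      rw [auxSeq_snoc_append u' um [c], auxSeq_cons₂, auxSeq_single]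
    have hUw1 : ∀ r : List ℤ, auxSeq ((u' ++ [um]) ++ w1 :: r)
        = auxSeq (u' ++ [um]) ++ (if um ≤ w1 then 1 else 0) :: auxSeq (w1 :: r) := by
      intro r
      rw [auxSeq_snoc_append u' um (w1 :: r), auxSeq_cons₂]
    rcases t with _ | ⟨t1, t'⟩
    · -- t = []
      have hax : auxSeq ((u' ++ [um]) ++ c :: ((w1 :: w'') ++ ([] : List ℤ)))
          = (auxSeq (u' ++ [um]) ++ [if um ≤ c then 1 else 0]) ++
            ((if c ≤ w1 then 1 else 0) :: auxSeq (w1 :: w'')) := by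
        rw [auxSeq_append (u' ++ [um]) c ((w1 :: w'') ++ []), hUc, List.append_nil,
          auxSeq_cons₂]
      have hay : auxSeq (((u' ++ [um]) ++ (w1 :: w'')) ++ c :: ([] : List ℤ))
          = auxSeq (u' ++ [um]) ++ ((if um ≤ w1 then 1 else 0) ::
              (auxSeq (w1 :: w'') ++ [if wk ≤ c then 1 else 0])) := by
        rw [List.append_assoc, List.cons_append, hUw1, ← List.cons_append,
          auxSeq_append (w1 :: w'') c [], hWc, auxSeq_single, List.append_nil]
      have key := keyArith n (u'.length + 1) (w''.length + 1) ((auxSeq (w1 :: w'')).sum)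
        (if um ≤ c then 1 else 0) (if um ≤ w1 then 1 else 0)
        (if c ≤ w1 then 1 else 0) (if wk ≤ c then 1 else 0) 0 0
        ((vtSyn (auxSeq ((u' ++ [um]) ++ c :: ((w1 :: w'') ++ ([] : List ℤ)))) : ℤ) -
          (vtSyn (auxSeq (((u' ++ [um]) ++ (w1 :: w'')) ++ c :: ([] : List ℤ))) : ℤ))
        (by rw [hax, hay]
            simp only [vtSyn_append, vtSyn_cons, vtSyn_nil, List.sum_append, List.sum_cons,
              List.sum_nil, List.length_append, List.length_cons, List.length_nil,
              auxSeq_length, Nat.add_sub_cancel]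
            push_cast
            ring)
        (by split <;> omega) (by split <;> omega) (by split <;> omega) (by split <;> omega)
        (by omega) (by omega)
        (by omega) (by omega) (by omega) (Or.inl ⟨rfl, rfl⟩) (by simp at hn; omega)
        (by split_ifs <;> intro h1 h2 <;> first | exact h1.elim | exact h2.elim | omega) (by split_ifs <;> intro h1 h2 <;> first | exact h1.elim | exact h2.elim | omega) (by omega) (by omega)
        hdvd
      rcases key with ⟨hf1, hf2, hsw⟩ | ⟨hf1, hf2, hsw⟩
      · have hcw1 : c ≤ w1 := by by_contra hcon; simp [hcon] at hf1
        have hwkc : wk ≤ c := by by_contra hcon; simp [hcon] at hf2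
        have hsum' : (auxSeq (w1 :: w'')).sum = (auxSeq (w1 :: w'')).length := by
          rw [auxSeq_length]; simpa using hsw
        exact finishA _ _ _ _ (allEq c w1 wk w'' w' hconc hcw1 hwkc hsum')
      · exfalso
        have hcw1 : ¬ c ≤ w1 := by by_contra hcon; simp [hcon] at hf1
        have hwkc : ¬ wk ≤ c := by by_contra hcon; simp [hcon] at hf2
        exact noDesc c w1 wk w'' w' hconc (by omega) (by omega) hsw
    · -- t = t1 :: t'
      have hWsplit : auxSeq ((w1 :: w'') ++ t1 :: t')
          = auxSeq (w1 :: w'') ++ (if wk ≤ t1 then 1 else 0) :: auxSeq (t1 :: t') := by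
        rw [hconc, auxSeq_snoc_append, auxSeq_cons₂]
      have hax : auxSeq ((u' ++ [um]) ++ c :: ((w1 :: w'') ++ t1 :: t'))
          = (auxSeq (u' ++ [um]) ++ [if um ≤ c then 1 else 0]) ++
            ((if c ≤ w1 then 1 else 0) ::
              (auxSeq (w1 :: w'') ++ (if wk ≤ t1 then 1 else 0) :: auxSeq (t1 :: t'))) := by
        rw [auxSeq_append (u' ++ [um]) c ((w1 :: w'') ++ t1 :: t'), hUc, List.cons_append,
          auxSeq_cons₂, ← List.cons_append, hWsplit]
      have hay : auxSeq (((u' ++ [um]) ++ (w1 :: w'')) ++ c :: (t1 :: t'))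
          = auxSeq (u' ++ [um]) ++ ((if um ≤ w1 then 1 else 0) ::
              ((auxSeq (w1 :: w'') ++ [if wk ≤ c then 1 else 0]) ++
                ((if c ≤ t1 then 1 else 0) :: auxSeq (t1 :: t')))) := by
        rw [List.append_assoc, List.cons_append, hUw1, ← List.cons_append,
          auxSeq_append (w1 :: w'') c (t1 :: t'), hWc, auxSeq_cons₂]
      have key := keyArith n (u'.length + 1) (w''.length + 1) ((auxSeq (w1 :: w'')).sum)
        (if um ≤ c then 1 else 0) (if um ≤ w1 then 1 else 0)
        (if c ≤ w1 then 1 else 0) (if wk ≤ c then 1 else 0)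
        (if wk ≤ t1 then 1 else 0) (if c ≤ t1 then 1 else 0)
        ((vtSyn (auxSeq ((u' ++ [um]) ++ c :: ((w1 :: w'') ++ t1 :: t'))) : ℤ) -
          (vtSyn (auxSeq (((u' ++ [um]) ++ (w1 :: w'')) ++ c :: (t1 :: t'))) : ℤ))
        (by rw [hax, hay]
            simp only [vtSyn_append, vtSyn_cons, vtSyn_nil, List.sum_append, List.sum_cons,
              List.sum_nil, List.length_append, List.length_cons, List.length_nil,
              auxSeq_length, Nat.add_sub_cancel]
            push_cast
            ring)
        (by split <;> omega) (by split <;> omega) (by split <;> omega) (by split <;> omega)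
        (by split <;> omega) (by split <;> omega)
        (by omega) (by omega) (by omega) (Or.inr (by simp at hn; omega)) (by simp at hn; omega)
        (by split_ifs <;> intro h1 h2 <;> first | exact h1.elim | exact h2.elim | omega) (by split_ifs <;> intro h1 h2 <;> first | exact h1.elim | exact h2.elim | omega)
        (by split_ifs <;> intro h1 h2 <;> first | exact h1.elim | exact h2.elim | omega) (by split_ifs <;> intro h1 h2 <;> first | exact h1.elim | exact h2.elim | omega)
        hdvd
      rcases key with ⟨hf1, hf2, hsw⟩ | ⟨hf1, hf2, hsw⟩
      · have hcw1 : c ≤ w1 := by by_contra hcon; simp [hcon] at hf1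
        have hwkc : wk ≤ c := by by_contra hcon; simp [hcon] at hf2
        have hsum' : (auxSeq (w1 :: w'')).sum = (auxSeq (w1 :: w'')).length := by
          rw [auxSeq_length]; simpa using hsw
        exact finishA _ _ _ _ (allEq c w1 wk w'' w' hconc hcw1 hwkc hsum')
      · exfalso
        have hcw1 : ¬ c ≤ w1 := by by_contra hcon; simp [hcon] at hf1
        have hwkc : ¬ wk ≤ c := by by_contra hcon; simp [hcon] at hf2
        exact noDesc c w1 wk w'' w' hconc (by omega) (by omega) hsw

lemma code_disjoint (n : ℕ) (a : ZMod n) (b : ZMod 4) (x y : List ℤ)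
    (hx : x ∈ VTn n a b) (hy : y ∈ VTn n a b) (z : List ℤ)
    (hzx : z ∈ ball x) (hzy : z ∈ ball y) : x = y := by
  obtain ⟨hxlen, hxQ, hxsyn, hxsum⟩ := hx
  obtain ⟨hylen, hyQ, hysyn, hysum⟩ := hy
  have hsum : ((x.sum : ℤ) : ZMod 4) = ((y.sum : ℤ) : ZMod 4) := hxsum.trans hysum.symm
  have hsyn : ((vtSyn (auxSeq x) : ℕ) : ZMod n) = ((vtSyn (auxSeq y) : ℕ) : ZMod n) :=
    hxsyn.trans hysyn.symm
  rcases hzx with rfl | ⟨hlzx, hzxs⟩ | ⟨hlzx, hzQ, hzxs⟩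
  · -- z = x
    rcases hzy with rfl | ⟨hlzy, _⟩ | ⟨hlzy, _, _⟩
    · rfl
    · exfalso; omega
    · exfalso; omega
  · -- z is a deletion of x
    rcases hzy with rfl | ⟨hlzy, hzys⟩ | ⟨hlzy, _, _⟩
    · exfalso; omega
    · -- z is a deletion of y too
      obtain ⟨u1, c, t1, hx1, hz1⟩ := exists_insert_of_sublist hzxs hlzx
      obtain ⟨u2, d, t2, hy1, hz2⟩ := exists_insert_of_sublist hzys hlzy
      have hz12 : u1 ++ t1 = u2 ++ t2 := by rw [← hz1, ← hz2]
      have hcq : 1 ≤ c ∧ c ≤ 4 := hxQ c (by rw [hx1]; simp)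
      have hdq : 1 ≤ d ∧ d ≤ 4 := hyQ d (by rw [hy1]; simp)
      rcases List.append_eq_append_iff.mp hz12 with ⟨m, hm1, hm2⟩ | ⟨m, hm1, hm2⟩
      · have hx' : x = u1 ++ c :: (m ++ t2) := by rw [hx1, hm2]
        have hy' : y = (u1 ++ m) ++ d :: t2 := by rw [hy1, hm1]
        rw [hx', hy']
        refine core n u1 m t2 c d hcq.1 hcq.2 hdq.1 hdq.2 ?_ ?_ ?_
        · have := hxlen
          rw [hx'] at this
          simp only [List.length_append, List.length_cons] at this
          omega
        · rw [← hx', ← hy']; exact hsum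
        · rw [← hx', ← hy']; exact hsyn
      · have hy' : y = u2 ++ d :: (m ++ t1) := by rw [hy1, hm2]
        have hx' : x = (u2 ++ m) ++ c :: t1 := by rw [hx1, hm1]
        rw [hx', hy']
        refine (core n u2 m t1 d c hdq.1 hdq.2 hcq.1 hcq.2 ?_ ?_ ?_).symm
        · have := hylen
          rw [hy'] at this
          simp only [List.length_append, List.length_cons] at this
          omega
        · rw [← hx', ← hy']; exact hsum.symm
        · rw [← hx', ← hy']; exact hsyn.symm
    · exfalso; omega
  · -- z is an insertion into x
    rcases hzy with rfl | ⟨hlzy, _⟩ | ⟨hlzy, _, hzys⟩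
    · exfalso; omega
    · exfalso; omega
    · -- z is an insertion into y too
      obtain ⟨u1, c, t1, hz1, hx1⟩ := exists_insert_of_sublist hzxs (by omega)
      obtain ⟨u2, d, t2, hz2, hy1⟩ := exists_insert_of_sublist hzys (by omega)
      have hz12 : u1 ++ c :: t1 = u2 ++ d :: t2 := by rw [← hz1, ← hz2]
      have hcq : 1 ≤ c ∧ c ≤ 4 := hzQ c (by rw [hz1]; simp)
      have hdq : 1 ≤ d ∧ d ≤ 4 := hzQ d (by rw [hz2]; simp)
      rcases List.append_eq_append_iff.mp hz12 with ⟨m, hm1, hm2⟩ | ⟨m, hm1, hm2⟩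
      · rcases m with _ | ⟨c', m'⟩
        · simp only [List.append_nil] at hm1
          rw [List.nil_append] at hm2
          injection hm2 with hcd ht
          rw [hx1, hy1, hm1, ht]
        · rw [List.cons_append] at hm2
          injection hm2 with hcd ht1
          have hx' : x = (u1 ++ m') ++ d :: t2 := by rw [hx1, ht1, List.append_assoc]
          have hy' : y = u1 ++ c :: (m' ++ t2) := by rw [hy1, hm1, ← hcd]; simp
          rw [hx', hy']
          refine (core n u1 m' t2 c d hcq.1 hcq.2 hdq.1 hdq.2 ?_ ?_ ?_).symm
          · have := hylen
            rw [hy'] at this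
            simp only [List.length_append, List.length_cons] at this
            omega
          · rw [← hx', ← hy']; exact hsum.symm
          · rw [← hx', ← hy']; exact hsyn.symm
      · rcases m with _ | ⟨d', m'⟩
        · simp only [List.append_nil] at hm1
          rw [List.nil_append] at hm2
          injection hm2 with hcd ht
          rw [hx1, hy1, hm1, ht]
        · rw [List.cons_append] at hm2
          injection hm2 with hcd ht2
          have hy' : y = (u2 ++ m') ++ c :: t1 := by rw [hy1, ht2, List.append_assoc]
          have hx' : x = u2 ++ d :: (m' ++ t1) := by rw [hx1, hm1, ← hcd]; simp
          rw [hx', hy']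
          refine core n u2 m' t1 d c hdq.1 hdq.2 hcq.1 hcq.2 ?_ ?_ ?_
          · have := hxlen
            rw [hx'] at this
            simp only [List.length_append, List.length_cons] at this
            omega
          · rw [← hx', ← hy']; exact hsum
          · rw [← hx', ← hy']; exact hsyn


/-- `VT_n(a,b,T)` is an `(n,T,B)`-synthesis code: every codeword has
synthesis time at most `T` and distinct codewords have disjoint single-indel balls. -/
theorem VTnT_is_synthesis_code (n : ℕ) (hn : 0 < n) (T : ℤ)
    (hT1 : (n : ℤ) < T) (hT2 : T ≤ 4 * n) (a : ZMod n) (b : ZMod 4) :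
    (∀ x ∈ VTnT n a b T, (synTime x : ℤ) ≤ T) ∧
    (∀ x ∈ VTnT n a b T, ∀ y ∈ VTnT n a b T, x ≠ y → Disjoint (ball x) (ball y)) := by
  constructor
  · intro x hx
    exact hx.2
  · intro x hx y hy hxy
    rw [Set.disjoint_left]
    intro z hzx hzy
    exact hxy (code_disjoint n a b x y hx.1 hy.1 z hzx hzy)
end
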